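/- Fix an integer k ≥ 1, an integer j ≥ 0 with j ≠ k, and α ∈ (−1/k, −1/(k+1)), and set p = p(n) = n^α (real power). Then lim_{n→∞} Var_{μ_{n,p}}[f_{n,j}] / Var_{μ_{n,p}}[f_{n,k}] = 0. -/

import Mathlib

open Finset MeasureTheory Filter Real

noncomputable section

open scoped Classical

/-- The edge set `E_n`: unordered pairs of distinct elements of `[n]`. -/
abbrev Edge (n : ℕ) := {e : Sym2 (Fin n) // ¬ e.IsDiag}

/-- An edge configuration on `[n]`. -/
abbrev Config (n : ℕ) := Edge n → Bool

/-- Bernoulli(p) weight of a state. -/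
def bern (p : ℝ) (b : Bool) : ℝ := if b then p else 1 - p

/-- Weight of a configuration under the static Erdős–Rényi measure `μ_{n,p}`. -/
def staticWeight (n : ℕ) (p : ℝ) (ω : Config n) : ℝ := ∏ e : Edge n, bern p (ω e)

/-- Expectation under the static Erdős–Rényi measure `μ_{n,p}`. -/
def staticExp (n : ℕ) (p : ℝ) (f : Config n → ℝ) : ℝ :=
  ∑ ω : Config n, staticWeight n p ω * f ω

/-- Variance under the static Erdős–Rényi measure `μ_{n,p}`. -/
def staticVar (n : ℕ) (p : ℝ) (f : Config n → ℝ) : ℝ :=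
  staticExp n p (fun ω => (f ω - staticExp n p f) ^ 2)

/-- `A` is a clique of the graph `G(ω)`: every pair of distinct elements of `A`
is an edge of `G(ω)`. -/
def IsCliqueOf {n : ℕ} (A : Finset (Fin n)) (ω : Config n) : Prop :=
  ∀ e : Edge n, e.1 ∈ A.sym2 → ω e = true

/-- The clique count `f_{n,j}(ω)`: the number of `(j+1)`-element subsets of `[n]`
all of whose pairs are edges of `G(ω)`. -/
def cliqueCount (n j : ℕ) (ω : Config n) : ℕ :=
  ((Finset.powersetCard (j + 1) (Finset.univ : Finset (Fin n))).filter
    (fun A => IsCliqueOf A ω)).card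

/-- Real-valued clique count. -/
def cliqueCountR (n j : ℕ) (ω : Config n) : ℝ := (cliqueCount n j ω : ℝ)

/-- The Euler characteristic `χ_n(ω) = Σ_{j=0}^{n-1} (-1)^j f_{n,j}(ω)`. -/
def eulerChar (n : ℕ) (ω : Config n) : ℝ :=
  ∑ j ∈ Finset.range n, (-1 : ℝ) ^ j * cliqueCountR n j ω

/-- Transition probability of the stationary on/off Markov chain with invariant
law Bernoulli(p) over a time increment `s`. -/
def transP (lam p s : ℝ) (b b' : Bool) : ℝ :=
  if b then (if b' then p + (1 - p) * Real.exp (-lam * s)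
             else (1 - p) * (1 - Real.exp (-lam * s)))
  else (if b' then p * (1 - Real.exp (-lam * s))
        else (1 - p) + p * Real.exp (-lam * s))

/-- Weight of a trajectory of the stationary on/off Markov chain observed at the
times `t 0 ≤ t 1 ≤ …`. -/
def pathWeight (lam p : ℝ) {m : ℕ} (t : Fin m → ℝ) (b : Fin m → Bool) : ℝ :=
  ∏ i : Fin m,
    if (i : ℕ) = 0 then bern p (b i)
    else transP lam p (t i - t ⟨(i : ℕ) - 1, lt_of_le_of_lt (Nat.sub_le _ _) i.isLt⟩)
      (b ⟨(i : ℕ) - 1, lt_of_le_of_lt (Nat.sub_le _ _) i.isLt⟩) (b i)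

/-- Weight of an `m`-tuple of edge configurations under the `m`-time dynamic
Erdős–Rényi measure `μ_{n,p}^{(t 0, …, t (m-1))}`. -/
def dynWeight (lam p : ℝ) (n : ℕ) {m : ℕ} (t : Fin m → ℝ) (ω : Fin m → Config n) : ℝ :=
  ∏ e : Edge n, pathWeight lam p t (fun i => ω i e)

/-- Expectation under the `m`-time dynamic Erdős–Rényi measure. -/
def dynExp (lam p : ℝ) (n : ℕ) {m : ℕ} (t : Fin m → ℝ) (F : (Fin m → Config n) → ℝ) : ℝ :=
  ∑ ω : Fin m → Config n, dynWeight lam p n t ω * F ω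

/-- The normalized clique count `f̄_{n,k}` (under the measure `μ_{n,p}`). -/
def fbar (n k : ℕ) (p : ℝ) (ω : Config n) : ℝ :=
  (cliqueCountR n k ω - staticExp n p (cliqueCountR n k)) /
    Real.sqrt (staticVar n p (cliqueCountR n k))

/-- The normalized Euler characteristic `χ̄_n` (under the measure `μ_{n,p}`). -/
def chibar (n : ℕ) (p : ℝ) (ω : Config n) : ℝ :=
  (eulerChar n ω - staticExp n p (eulerChar n)) /
    Real.sqrt (staticVar n p (eulerChar n))

/-- The clique indicator `1_A(ω)` as a real number. -/
def cliqueInd {n : ℕ} (A : Finset (Fin n)) (ω : Config n) : ℝ :=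
  if IsCliqueOf A ω then 1 else 0

/-- A quadruple of subsets has an independent set if one of them shares at most
one vertex with each of the others. -/
def HasIndepSet {n : ℕ} (A : Fin 4 → Finset (Fin n)) : Prop :=
  ∃ q : Fin 4, ∀ r : Fin 4, r ≠ q → ((A q) ∩ (A r)).card ≤ 1

/-- The quantity `g(h; Ā)` built from clique indicators at three times. -/
def gQuad {n : ℕ} (A : Fin 4 → Finset (Fin n)) (ω : Fin 3 → Config n) : ℝ :=
  (cliqueInd (A 0) (ω 2) - cliqueInd (A 0) (ω 1)) *
  (cliqueInd (A 1) (ω 2) - cliqueInd (A 1) (ω 1)) *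
  (cliqueInd (A 2) (ω 1) - cliqueInd (A 2) (ω 0)) *
  (cliqueInd (A 3) (ω 1) - cliqueInd (A 3) (ω 0))

/-- `ver(Ā)`: inclusion–exclusion count of vertices. -/
def verA {n : ℕ} (A : Fin 4 → Finset (Fin n)) : ℤ :=
  (∑ q : Fin 4, ((A q).card : ℤ))
  - (∑ q : Fin 4, ∑ r : Fin 4, if q < r then (((A q) ∩ (A r)).card : ℤ) else 0)
  + (∑ q : Fin 4, ∑ r : Fin 4, ∑ s : Fin 4,
      if q < r ∧ r < s then (((A q) ∩ (A r) ∩ (A s)).card : ℤ) else 0)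
  - ((A 0 ∩ A 1 ∩ A 2 ∩ A 3).card : ℤ)

/-- `pair(Ā)`: inclusion–exclusion count of potential edges. -/
def pairA {n : ℕ} (A : Fin 4 → Finset (Fin n)) : ℤ :=
  (∑ q : Fin 4, (Nat.choose (A q).card 2 : ℤ))
  - (∑ q : Fin 4, ∑ r : Fin 4, if q < r then (Nat.choose ((A q) ∩ (A r)).card 2 : ℤ) else 0)
  + (∑ q : Fin 4, ∑ r : Fin 4, ∑ s : Fin 4,
      if q < r ∧ r < s then (Nat.choose ((A q) ∩ (A r) ∩ (A s)).card 2 : ℤ) else 0)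
  - (Nat.choose (A 0 ∩ A 1 ∩ A 2 ∩ A 3).card 2 : ℤ)

def edgesOf {n : ℕ} (A : Finset (Fin n)) : Finset (Edge n) :=
  Finset.univ.filter (fun e => e.1 ∈ A.sym2)

lemma mem_edgesOf {n : ℕ} {A : Finset (Fin n)} {e : Edge n} :
    e ∈ edgesOf A ↔ e.1 ∈ A.sym2 := by simp [edgesOf]

lemma edgesOf_inter {n : ℕ} (A B : Finset (Fin n)) :
    edgesOf (A ∩ B) = edgesOf A ∩ edgesOf B := by
  ext e
  simp only [mem_edgesOf, Finset.mem_inter, Finset.mem_sym2_iff]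
  constructor
  · intro h; exact ⟨fun a ha => (h a ha).1, fun a ha => (h a ha).2⟩
  · rintro ⟨h1, h2⟩ a ha; exact ⟨h1 a ha, h2 a ha⟩

lemma card_edgesOf {n : ℕ} (A : Finset (Fin n)) :
    (edgesOf A).card = A.card.choose 2 := by
  classical
  have h1 : (edgesOf A).card = (A.sym2.filter (fun s => ¬ s.IsDiag)).card := by
    apply Finset.card_bij (fun e _ => e.1)
    · intro e he; simp only [Finset.mem_filter]; exact ⟨mem_edgesOf.1 he, e.2⟩
    · intro e₁ h₁ e₂ h₂ h; exact Subtype.ext h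
    · intro s hs
      rw [Finset.mem_filter] at hs
      exact ⟨⟨s, hs.2⟩, mem_edgesOf.2 hs.1, rfl⟩
  have h2 : (A.sym2.filter (fun s => s.IsDiag)).card = A.card := by
    symm
    apply Finset.card_bij (fun (a : Fin n) (_ : a ∈ A) => Sym2.diag a) ?_ ?_ ?_
    · intro a ha
      simp only [Finset.mem_filter]
      refine ⟨?_, Sym2.diag_isDiag a⟩
      rw [Sym2.diag]
      exact Finset.mk_mem_sym2_iff.2 ⟨ha, ha⟩
    · intro a₁ h₁ a₂ h₂ h
      exact Sym2.diag_injective h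
    · intro s hs
      rw [Finset.mem_filter] at hs
      obtain ⟨x, y⟩ := s
      have hxy : x = y := Sym2.mk_isDiag_iff.1 hs.2
      subst hxy
      exact ⟨x, (Finset.mk_mem_sym2_iff.1 hs.1).1, rfl⟩
  have h3 : (A.sym2.filter (fun s => ¬ s.IsDiag)).card
      = A.sym2.card - (A.sym2.filter (fun s => s.IsDiag)).card := by
    rw [Finset.filter_not, Finset.card_sdiff_of_subset (Finset.filter_subset _ _)]
  have h4 := Finset.card_sym2 A
  have h5 : (A.card + 1).choose 2 = A.card + A.card.choose 2 := by
    simpa [Nat.choose_one_right] using Nat.choose_succ_succ A.card 1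
  omega

lemma sum_prod_bool {ι : Type*} [Fintype ι] [DecidableEq ι] (g : ι → Bool → ℝ) :
    ∑ ω : ι → Bool, ∏ i, g i (ω i) = ∏ i, (g i true + g i false) := by
  have := Finset.prod_univ_sum (fun _ : ι => (Finset.univ : Finset Bool)) (fun i b => g i b)
  rw [Fintype.piFinset_univ] at this
  rw [← this]
  apply Finset.prod_congr rfl
  intro i _
  simp [Fintype.sum_bool]

lemma staticExp_prod_ind {n : ℕ} (p : ℝ) (S : Finset (Edge n)) :
    staticExp n p (fun ω => ∏ e ∈ S, (if ω e = true then (1:ℝ) else 0)) = p ^ S.card := by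
  unfold staticExp staticWeight
  have key : ∀ ω : Config n,
      (∏ e : Edge n, bern p (ω e)) * (∏ e ∈ S, (if ω e = true then (1:ℝ) else 0))
      = ∏ e : Edge n, (bern p (ω e) * (if e ∈ S then (if ω e = true then (1:ℝ) else 0) else 1)) := by
    intro ω
    rw [Finset.prod_mul_distrib]
    congr 1
    rw [Finset.prod_ite_mem Finset.univ S (fun e => if ω e = true then (1:ℝ) else 0),
      Finset.univ_inter]
  simp_rw [key]
  rw [sum_prod_bool (fun e b => bern p b * (if e ∈ S then (if b = true then (1:ℝ) else 0) else 1))]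
  have hEe : ∀ e : Edge n,
      (bern p true * (if e ∈ S then (if (true : Bool) = true then (1:ℝ) else 0) else 1)
        + bern p false * (if e ∈ S then (if (false : Bool) = true then (1:ℝ) else 0) else 1))
      = if e ∈ S then p else 1 := by
    intro e; by_cases h : e ∈ S <;> simp [h, bern]
  rw [Finset.prod_congr rfl (fun e _ => hEe e),
    Finset.prod_ite_mem Finset.univ S (fun _ => p), Finset.univ_inter, Finset.prod_const]

lemma cliqueInd_eq_prod {n : ℕ} (A : Finset (Fin n)) (ω : Config n) :
    cliqueInd A ω = ∏ e ∈ edgesOf A, (if ω e = true then (1:ℝ) else 0) := by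
  rw [Finset.prod_boole, cliqueInd]
  congr 1
  simp only [eq_iff_iff]
  constructor
  · intro h e he; exact h e (mem_edgesOf.1 he)
  · intro h e he; exact h e (mem_edgesOf.2 he)

lemma staticExp_cliqueInd {n : ℕ} (p : ℝ) (A : Finset (Fin n)) :
    staticExp n p (cliqueInd A) = p ^ (A.card.choose 2) := by
  have : staticExp n p (cliqueInd A)
      = staticExp n p (fun ω => ∏ e ∈ edgesOf A, (if ω e = true then (1:ℝ) else 0)) := by
    unfold staticExp; exact Finset.sum_congr rfl fun ω _ => by rw [cliqueInd_eq_prod]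
  rw [this, staticExp_prod_ind, card_edgesOf]

lemma staticExp_cliqueInd_mul {n : ℕ} (p : ℝ) (A B : Finset (Fin n)) :
    staticExp n p (fun ω => cliqueInd A ω * cliqueInd B ω)
      = p ^ (edgesOf A ∪ edgesOf B).card := by
  have key : ∀ ω : Config n, cliqueInd A ω * cliqueInd B ω
      = ∏ e ∈ edgesOf A ∪ edgesOf B, (if ω e = true then (1:ℝ) else 0) := by
    intro ω
    rw [cliqueInd_eq_prod, cliqueInd_eq_prod, Finset.prod_boole, Finset.prod_boole,
      Finset.prod_boole]
    have hU : (∀ e ∈ edgesOf A ∪ edgesOf B, ω e = true)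
        ↔ (∀ e ∈ edgesOf A, ω e = true) ∧ (∀ e ∈ edgesOf B, ω e = true) :=
      Finset.forall_mem_union
    by_cases hA : ∀ e ∈ edgesOf A, ω e = true <;>
      by_cases hB : ∀ e ∈ edgesOf B, ω e = true
    · rw [if_pos hA, if_pos hB, if_pos (hU.2 ⟨hA, hB⟩), one_mul]
    · rw [if_pos hA, if_neg hB, if_neg (fun h => hB (hU.1 h).2), mul_zero]
    · rw [if_neg hA, if_pos hB, if_neg (fun h => hA (hU.1 h).1), zero_mul]
    · rw [if_neg hA, if_neg hB, if_neg (fun h => hB (hU.1 h).2), zero_mul]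
  have h2 : staticExp n p (fun ω => cliqueInd A ω * cliqueInd B ω)
      = staticExp n p (fun ω => ∏ e ∈ edgesOf A ∪ edgesOf B, (if ω e = true then (1:ℝ) else 0)) := by
    unfold staticExp; exact Finset.sum_congr rfl fun ω _ => by dsimp only; rw [key]
  rw [h2, staticExp_prod_ind]

lemma staticWeight_sum_one {n : ℕ} {p : ℝ} : ∑ ω : Config n, staticWeight n p ω = 1 := by
  unfold staticWeight
  rw [sum_prod_bool (fun _ b => bern p b)]
  have : bern p true + bern p false = 1 := by simp [bern]
  rw [Finset.prod_congr rfl (fun e _ => this), Finset.prod_const_one]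

lemma staticVar_eq_sub {n : ℕ} {p : ℝ} (f : Config n → ℝ) :
    staticVar n p f = staticExp n p (fun ω => f ω ^ 2) - (staticExp n p f) ^ 2 := by
  unfold staticVar
  set E := staticExp n p f with hE
  unfold staticExp
  have expand : ∀ ω : Config n, staticWeight n p ω * (f ω - E)^2
      = staticWeight n p ω * f ω^2 - 2*E*(staticWeight n p ω * f ω)
        + E^2 * staticWeight n p ω := by
    intro ω; ring
  rw [Finset.sum_congr rfl (fun ω _ => expand ω)]
  rw [Finset.sum_add_distrib, Finset.sum_sub_distrib, ← Finset.mul_sum, ← Finset.mul_sum,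
    staticWeight_sum_one]
  rw [hE]
  unfold staticExp
  ring

lemma cliqueCountR_eq {n j : ℕ} (ω : Config n) :
    cliqueCountR n j ω
      = ∑ A ∈ Finset.powersetCard (j+1) (Finset.univ : Finset (Fin n)), cliqueInd A ω := by
  unfold cliqueCountR cliqueCount cliqueInd
  rw [Finset.card_filter]
  push_cast
  rfl

def NN (n j l : ℕ) : ℕ :=
  (((Finset.powersetCard (j+1) (Finset.univ : Finset (Fin n)))
      ×ˢ (Finset.powersetCard (j+1) (Finset.univ : Finset (Fin n)))).filter
    (fun q => (q.1 ∩ q.2).card = l)).card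

lemma card_union_edges {n j : ℕ} {A B : Finset (Fin n)}
    (hA : A.card = j+1) (hB : B.card = j+1) :
    (edgesOf A ∪ edgesOf B).card + ((A ∩ B).card.choose 2) = 2 * (j+1).choose 2 := by
  have h := Finset.card_union_add_card_inter (edgesOf A) (edgesOf B)
  rw [← edgesOf_inter, card_edgesOf, card_edgesOf, card_edgesOf, hA, hB] at h
  omega

lemma staticVar_cliqueCountR (n : ℕ) (p : ℝ) (j : ℕ) :
    staticVar n p (cliqueCountR n j) =
      ∑ q ∈ (Finset.powersetCard (j+1) (Finset.univ : Finset (Fin n)))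
          ×ˢ (Finset.powersetCard (j+1) (Finset.univ : Finset (Fin n))),
        (p ^ (edgesOf q.1 ∪ edgesOf q.2).card - p ^ (2 * (j+1).choose 2)) := by
  classical
  set P := Finset.powersetCard (j+1) (Finset.univ : Finset (Fin n)) with hP
  rw [staticVar_eq_sub]
  have hsq : staticExp n p (fun ω => cliqueCountR n j ω ^ 2)
      = ∑ q ∈ P ×ˢ P, p ^ (edgesOf q.1 ∪ edgesOf q.2).card := by
    have h1 : ∀ ω : Config n, cliqueCountR n j ω ^ 2
        = ∑ q ∈ P ×ˢ P, cliqueInd q.1 ω * cliqueInd q.2 ω := by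
      intro ω
      rw [cliqueCountR_eq, sq, Finset.sum_mul_sum, Finset.sum_product]
    calc staticExp n p (fun ω => cliqueCountR n j ω ^ 2)
        = staticExp n p (fun ω => ∑ q ∈ P ×ˢ P, cliqueInd q.1 ω * cliqueInd q.2 ω) := by
          unfold staticExp
          exact Finset.sum_congr rfl fun ω _ => by dsimp only; rw [h1]
      _ = ∑ q ∈ P ×ˢ P, staticExp n p (fun ω => cliqueInd q.1 ω * cliqueInd q.2 ω) := by
          unfold staticExp
          simp_rw [Finset.mul_sum]
          rw [Finset.sum_comm]
      _ = ∑ q ∈ P ×ˢ P, p ^ (edgesOf q.1 ∪ edgesOf q.2).card :=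
          Finset.sum_congr rfl fun q _ => staticExp_cliqueInd_mul p q.1 q.2
  have hexp : staticExp n p (cliqueCountR n j) = ∑ A ∈ P, p ^ ((j+1).choose 2) := by
    calc staticExp n p (cliqueCountR n j)
        = staticExp n p (fun ω => ∑ A ∈ P, cliqueInd A ω) := by
          unfold staticExp
          exact Finset.sum_congr rfl fun ω _ => by dsimp only; rw [cliqueCountR_eq]
      _ = ∑ A ∈ P, staticExp n p (cliqueInd A) := by
          unfold staticExp
          simp_rw [Finset.mul_sum]
          rw [Finset.sum_comm]
      _ = ∑ A ∈ P, p ^ ((j+1).choose 2) := by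
          refine Finset.sum_congr rfl fun A hA => ?_
          rw [staticExp_cliqueInd, Finset.mem_powersetCard_univ.1 hA]
  have hexpsq : (staticExp n p (cliqueCountR n j)) ^ 2
      = ∑ q ∈ P ×ˢ P, p ^ (2 * (j+1).choose 2) := by
    rw [hexp, sq, Finset.sum_mul_sum, Finset.sum_product]
    refine Finset.sum_congr rfl fun A _ => Finset.sum_congr rfl fun B _ => ?_
    rw [← pow_add, two_mul]
  rw [hsq, hexpsq, ← Finset.sum_sub_distrib]

lemma var_identity (n : ℕ) (p : ℝ) (j : ℕ) :
    staticVar n p (cliqueCountR n j)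
      = ∑ l ∈ Finset.range (j+2),
          (NN n j l : ℝ) * (p ^ (2*(j+1).choose 2 - l.choose 2) - p ^ (2*(j+1).choose 2)) := by
  classical
  rw [staticVar_cliqueCountR]
  have hmaps : ∀ q ∈ (Finset.powersetCard (j+1) (Finset.univ : Finset (Fin n)))
      ×ˢ (Finset.powersetCard (j+1) (Finset.univ : Finset (Fin n))),
      (q.1 ∩ q.2).card ∈ Finset.range (j+2) := by
    rintro ⟨A, B⟩ hq
    rw [Finset.mem_product] at hq
    have hA' : A.card = j + 1 := Finset.mem_powersetCard_univ.1 hq.1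
    have hle : (A ∩ B).card ≤ A.card := Finset.card_le_card Finset.inter_subset_left
    rw [Finset.mem_range]
    show (A ∩ B).card < j + 2
    omega
  rw [← Finset.sum_fiberwise_of_maps_to hmaps
    (fun q => p ^ (edgesOf q.1 ∪ edgesOf q.2).card - p ^ (2 * (j+1).choose 2))]
  refine Finset.sum_congr rfl fun l _ => ?_
  have hconst : ∀ q ∈ ((Finset.powersetCard (j+1) (Finset.univ : Finset (Fin n)))
      ×ˢ (Finset.powersetCard (j+1) (Finset.univ : Finset (Fin n)))).filter
        (fun q => (q.1 ∩ q.2).card = l),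
      (p ^ (edgesOf q.1 ∪ edgesOf q.2).card - p ^ (2 * (j+1).choose 2))
        = (p ^ (2*(j+1).choose 2 - l.choose 2) - p ^ (2*(j+1).choose 2)) := by
    rintro ⟨A, B⟩ hq
    rw [Finset.mem_filter, Finset.mem_product] at hq
    obtain ⟨⟨hA, hB⟩, hl⟩ := hq
    have hA' : A.card = j + 1 := Finset.mem_powersetCard_univ.1 hA
    have hB' : B.card = j + 1 := Finset.mem_powersetCard_univ.1 hB
    have hl' : (A ∩ B).card = l := hl
    have hsum := card_union_edges hA' hB'
    rw [hl'] at hsum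
    have hu : (edgesOf A ∪ edgesOf B).card = 2*(j+1).choose 2 - l.choose 2 := by omega
    show p ^ (edgesOf A ∪ edgesOf B).card - p ^ (2 * (j+1).choose 2) = _
    rw [hu]
  rw [Finset.sum_congr rfl hconst, Finset.sum_const, nsmul_eq_mul]
  rfl

lemma NN_eq (n j l : ℕ) (hl : l ≤ j+1) :
    NN n j l = n.choose (j+1) * ((j+1).choose l * (n - (j+1)).choose (j+1-l)) := by
  classical
  set P := Finset.powersetCard (j+1) (Finset.univ : Finset (Fin n)) with hP
  set T := P.sigma (fun A => (Finset.powersetCard l A) ×ˢ (Finset.powersetCard (j+1-l) Aᶜ))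
    with hT
  have hcard : NN n j l = T.card := by
    apply Finset.card_bij'
      (i := fun (q : Finset (Fin n) × Finset (Fin n)) _ =>
        (⟨q.1, (q.1 ∩ q.2, q.2 \ q.1)⟩ : Σ _ : Finset (Fin n), Finset (Fin n) × Finset (Fin n)))
      (j := fun (b : Σ _ : Finset (Fin n), Finset (Fin n) × Finset (Fin n)) _ =>
        (b.1, b.2.1 ∪ b.2.2))
    · rintro ⟨A, B⟩ hq
      rw [Finset.mem_filter, Finset.mem_product] at hq
      obtain ⟨⟨hA, hB⟩, hli⟩ := hq
      have hA' : A.card = j + 1 := Finset.mem_powersetCard_univ.1 hA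
      have hB' : B.card = j + 1 := Finset.mem_powersetCard_univ.1 hB
      have hl' : (A ∩ B).card = l := hli
      rw [Finset.mem_sigma]
      constructor
      · exact hA
      rw [Finset.mem_product]
      constructor
      · exact Finset.mem_powersetCard.2 ⟨Finset.inter_subset_left, hl'⟩
      · refine Finset.mem_powersetCard.2 ⟨?_, ?_⟩
        · intro x hx
          rw [Finset.mem_sdiff] at hx
          exact Finset.mem_compl.2 hx.2
        · have h1 : (B \ A).card + (B ∩ A).card = B.card :=
            Finset.card_sdiff_add_card_inter B A
          rw [Finset.inter_comm] at h1
          show (B \ A).card = j + 1 - l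
          omega
    · rintro ⟨A, C, D⟩ hb
      rw [Finset.mem_sigma, Finset.mem_product] at hb
      obtain ⟨hA, hC, hD⟩ := hb
      obtain ⟨hCsub, hCcard⟩ := Finset.mem_powersetCard.1 hC
      obtain ⟨hDsub, hDcard⟩ := Finset.mem_powersetCard.1 hD
      have hA' : A.card = j + 1 := Finset.mem_powersetCard_univ.1 hA
      have hdisj : Disjoint C D := by
        refine Finset.disjoint_left.2 fun x hxC hxD => ?_
        exact Finset.mem_compl.1 (hDsub hxD) (hCsub hxC)
      rw [Finset.mem_filter, Finset.mem_product]
      refine ⟨⟨hA, ?_⟩, ?_⟩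
      · refine Finset.mem_powersetCard_univ.2 ?_
        rw [Finset.card_union_of_disjoint hdisj, hCcard, hDcard]
        omega
      · show (A ∩ (C ∪ D)).card = l
        have : A ∩ (C ∪ D) = C := by
          ext x
          simp only [Finset.mem_inter, Finset.mem_union]
          constructor
          · rintro ⟨hxA, hxC | hxD⟩
            · exact hxC
            · exact absurd hxA (Finset.mem_compl.1 (hDsub hxD))
          · intro hxC
            exact ⟨hCsub hxC, Or.inl hxC⟩
        rw [this, hCcard]
    · rintro ⟨A, B⟩ hq
      rw [Finset.mem_filter, Finset.mem_product] at hq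
      have : A ∩ B ∪ B \ A = B := by
        ext x
        simp only [Finset.mem_union, Finset.mem_inter, Finset.mem_sdiff]
        tauto
      simp only [this]
    · rintro ⟨A, C, D⟩ hb
      rw [Finset.mem_sigma, Finset.mem_product] at hb
      obtain ⟨hA, hC, hD⟩ := hb
      obtain ⟨hCsub, hCcard⟩ := Finset.mem_powersetCard.1 hC
      obtain ⟨hDsub, hDcard⟩ := Finset.mem_powersetCard.1 hD
      have h1 : A ∩ (C ∪ D) = C := by
        ext x
        simp only [Finset.mem_inter, Finset.mem_union]
        constructor
        · rintro ⟨hxA, hxC | hxD⟩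
          · exact hxC
          · exact absurd hxA (Finset.mem_compl.1 (hDsub hxD))
        · intro hxC
          exact ⟨hCsub hxC, Or.inl hxC⟩
      have h2 : (C ∪ D) \ A = D := by
        ext x
        simp only [Finset.mem_sdiff, Finset.mem_union]
        constructor
        · rintro ⟨hxC | hxD, hxA⟩
          · exact absurd (hCsub hxC) hxA
          · exact hxD
        · intro hxD
          exact ⟨Or.inr hxD, Finset.mem_compl.1 (hDsub hxD)⟩
      simp only [h1, h2]
  rw [hcard, hT, Finset.card_sigma]
  have hconst : ∀ A ∈ P,
      ((Finset.powersetCard l A) ×ˢ (Finset.powersetCard (j+1-l) Aᶜ)).card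
        = (j+1).choose l * (n - (j+1)).choose (j+1-l) := by
    intro A hA
    have hA' : A.card = j + 1 := Finset.mem_powersetCard_univ.1 hA
    rw [Finset.card_product, Finset.card_powersetCard, Finset.card_powersetCard, hA',
      Finset.card_compl, hA', Fintype.card_fin]
  rw [Finset.sum_congr rfl hconst, Finset.sum_const, smul_eq_mul, hP,
    Finset.card_powersetCard, Finset.card_univ, Fintype.card_fin]

def PHI (α j x : ℝ) : ℝ := 2*(j+1) - x + α*(j*(j+1) - x*(x-1)/2)

def EE (j l : ℕ) (α : ℝ) : ℝ :=
  ((2*(j+1) - l : ℕ) : ℝ) + α * ((2*((j+1).choose 2) - l.choose 2 : ℕ) : ℝ)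

lemma EE_eq_PHI (j l : ℕ) (hl : l ≤ j+1) (α : ℝ) : EE j l α = PHI α j l := by
  have h1 : l ≤ 2*(j+1) := by omega
  have h2 : l.choose 2 ≤ 2*((j+1).choose 2) :=
    le_trans (Nat.choose_le_choose 2 hl) (by omega)
  rw [EE, PHI, Nat.cast_sub h1, Nat.cast_sub h2]
  rw [Nat.cast_mul, Nat.cast_mul, Nat.cast_choose_two, Nat.cast_choose_two]
  push_cast
  ring

lemma peak (F : ℕ → ℝ) (k : ℕ) (hup : ∀ m, m < k → F m < F (m+1))
    (hdown : ∀ m, k ≤ m → F (m+1) < F m) {j : ℕ} (hjk : j ≠ k) : F j < F k := by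
  rcases lt_or_gt_of_ne hjk with h | h
  · have claim : ∀ m, j < m → m ≤ k → F j < F m := by
      intro m
      induction m with
      | zero => omega
      | succ m ih =>
        intro hjm hmk
        rcases eq_or_lt_of_le (Nat.lt_succ_iff.1 hjm) with heq | hlt
        · rw [heq]; exact hup m (by omega)
        · exact lt_trans (ih hlt (by omega)) (hup m (by omega))
    exact claim k h le_rfl
  · have claim : ∀ m, k < m → F m < F k := by
      intro m
      induction m with
      | zero => omega
      | succ m ih =>
        intro hkm
        rcases eq_or_lt_of_le (Nat.lt_succ_iff.1 hkm) with heq | hlt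
        · rw [← heq]; exact hdown k le_rfl
        · exact lt_trans (hdown m (by omega)) (ih hlt)
    exact claim j h

lemma convex_step (α : ℝ) (hα : α < 0) (j x : ℝ) (hx2 : 2 ≤ x) (hxb : x ≤ j+1) :
    PHI α j x ≤ max (PHI α j 2) (PHI α j (j+1)) := by
  have hb2 : (2:ℝ) ≤ j + 1 := le_trans hx2 hxb
  rcases eq_or_lt_of_le hb2 with heq | hb2'
  · have hx : x = 2 := le_antisymm (by linarith) hx2
    rw [hx]
    exact le_max_left _ _
  have hpos : (0:ℝ) < j + 1 - 2 := by linarith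
  have k1 : 0 ≤ (x - 2) * ((j+1) - x) * (-α) :=
    mul_nonneg (mul_nonneg (by linarith) (by linarith)) (by linarith)
  have k1' : 0 ≤ ((x - 2) * ((j+1) - x) * (-α)) * (j + 1 - 2) :=
    mul_nonneg k1 hpos.le
  rcases le_total (PHI α j 2) (PHI α j (j+1)) with h | h
  · rw [max_eq_right h]
    have k2 : 0 ≤ ((j+1) - x) * (PHI α j (j+1) - PHI α j 2) :=
      mul_nonneg (by linarith) (by linarith)
    unfold PHI at *
    nlinarith [k1', k2, hpos]
  · rw [max_eq_left h]
    have k2 : 0 ≤ (x - 2) * (PHI α j 2 - PHI α j (j+1)) :=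
      mul_nonneg (by linarith) (by linarith)
    unfold PHI at *
    nlinarith [k1', k2, hpos]

lemma exponent_lt (k j l : ℕ) (hk : 1 ≤ k) (hjk : j ≠ k) (hl2 : 2 ≤ l) (hlj : l ≤ j+1)
    (α : ℝ) (hα1 : -(1/(k:ℝ)) < α) (hα2 : α < -(1/((k:ℝ)+1))) :
    PHI α j l < max (PHI α k 2) (PHI α k ((k:ℝ)+1)) := by
  have hk0 : (0:ℝ) < k := by positivity
  have hα0 : α < 0 := by
    have h0 : (0:ℝ) < 1/((k:ℝ)+1) := by positivity
    linarith
  have hαk : -1 < α * k := by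
    have := mul_lt_mul_of_pos_right hα1 hk0
    rw [neg_mul, div_mul_cancel₀] at this
    · linarith
    · exact ne_of_gt hk0
  have hαk1 : α * ((k:ℝ)+1) < -1 := by
    have h1 : (0:ℝ) < (k:ℝ)+1 := by positivity
    have := mul_lt_mul_of_pos_right hα2 h1
    rw [neg_mul, div_mul_cancel₀] at this
    · linarith
    · exact ne_of_gt h1
  -- increments
  have hup : ∀ m : ℕ, m < k → 0 < 1 + α * ((m:ℝ)+1) := by
    intro m hm
    have hmk : (m:ℝ)+1 ≤ k := by exact_mod_cast Nat.succ_le_of_lt hm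
    nlinarith [mul_nonneg (neg_nonneg.2 hα0.le) (sub_nonneg.2 hmk)]
  have hdown : ∀ m : ℕ, k ≤ m → 1 + α * ((m:ℝ)+1) < 0 := by
    intro m hm
    have hmk : (k:ℝ)+1 ≤ (m:ℝ)+1 := by
      have : (k:ℝ) ≤ m := by exact_mod_cast hm
      linarith
    nlinarith [mul_nonneg (neg_nonneg.2 hα0.le) (sub_nonneg.2 hmk)]
  -- the two endpoint sequences
  set H : ℕ → ℝ := fun m => PHI α m 2 with hH
  set G : ℕ → ℝ := fun m => PHI α m ((m:ℝ)+1) with hG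
  have hHj : ∀ m : ℕ, m ≠ k → H m < H k := by
    intro m hm
    apply peak H k ?_ ?_ hm
    · intro m' hm'
      have := hup m' hm'
      show PHI α m' 2 < PHI α (↑(m'+1)) 2
      push_cast
      unfold PHI
      nlinarith [this]
    · intro m' hm'
      have := hdown m' hm'
      show PHI α (↑(m'+1)) 2 < PHI α m' 2
      push_cast
      unfold PHI
      nlinarith [this]
  have hGj : ∀ m : ℕ, m ≠ k → G m < G k := by
    intro m hm
    apply peak G k ?_ ?_ hm
    · intro m' hm'
      have := hup m' hm'
      show PHI α m' ((m':ℝ)+1) < PHI α (↑(m'+1)) (↑(m'+1)+1)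
      push_cast
      unfold PHI
      nlinarith [this]
    · intro m' hm'
      have := hdown m' hm'
      show PHI α (↑(m'+1)) (↑(m'+1)+1) < PHI α m' ((m':ℝ)+1)
      push_cast
      unfold PHI
      nlinarith [this]
  have hconv : PHI α j l ≤ max (PHI α j 2) (PHI α j ((j:ℝ)+1)) := by
    apply convex_step α hα0
    · exact_mod_cast hl2
    · exact_mod_cast hlj
  have h1 : PHI α j 2 < PHI α k 2 := hHj j hjk
  have h2 : PHI α j ((j:ℝ)+1) < PHI α k ((k:ℝ)+1) := hGj j hjk
  calc PHI α j l ≤ max (PHI α j 2) (PHI α j ((j:ℝ)+1)) := hconv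
    _ < max (PHI α k 2) (PHI α k ((k:ℝ)+1)) :=
        max_lt (lt_of_lt_of_le h1 (le_max_left _ _)) (lt_of_lt_of_le h2 (le_max_right _ _))

lemma staticVar_nonneg {n : ℕ} {p : ℝ} (h0 : 0 ≤ p) (h1 : p ≤ 1) (f : Config n → ℝ) :
    0 ≤ staticVar n p f := by
  unfold staticVar staticExp
  apply Finset.sum_nonneg
  intro ω _
  apply mul_nonneg
  · unfold staticWeight
    apply Finset.prod_nonneg
    intro e _
    unfold bern
    split <;> linarith
  · positivity

lemma NN_le (n j l : ℕ) (hl : l ≤ j+1) :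
    NN n j l ≤ (j+1)^(j+1) * n^(2*(j+1)-l) := by
  rw [NN_eq n j l hl]
  have h1 : n.choose (j+1) ≤ n^(j+1) := Nat.choose_le_pow _ _
  have h2 : (j+1).choose l ≤ (j+1)^(j+1) :=
    le_trans (Nat.choose_le_pow _ _) (Nat.pow_le_pow_right (by omega) hl)
  have h3 : (n-(j+1)).choose (j+1-l) ≤ n^(j+1-l) :=
    le_trans (Nat.choose_le_pow _ _) (Nat.pow_le_pow_left (Nat.sub_le n _) _)
  calc n.choose (j+1) * ((j+1).choose l * (n-(j+1)).choose (j+1-l))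
      ≤ n^(j+1) * ((j+1)^(j+1) * n^(j+1-l)) :=
        Nat.mul_le_mul h1 (Nat.mul_le_mul h2 h3)
    _ = (j+1)^(j+1) * n^(2*(j+1)-l) := by
        have he : (j+1)+(j+1-l) = 2*(j+1)-l := by omega
        rw [← he, pow_add]
        ring

lemma NN_ge (n k l : ℕ) (hl2 : 2 ≤ l) (hl : l ≤ k+1) (hn : 4*(k+1)+4 ≤ n) :
    ((n:ℝ))^(2*(k+1)-l) / ((4:ℝ)^(2*(k+1)) * ((Nat.factorial (k+1)) : ℝ) * ((Nat.factorial (k+1)) : ℝ))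
      ≤ (NN n k l : ℝ) := by
  have hn0 : (0:ℝ) ≤ (n:ℝ) := Nat.cast_nonneg n
  have h4a : (n:ℝ)/4 ≤ ((n + 1 - (k+1) : ℕ) : ℝ) := by
    have h : n ≤ 4*(n+1-(k+1)) := by omega
    have h' : (n:ℝ) ≤ 4*((n+1-(k+1) : ℕ):ℝ) := by exact_mod_cast h
    linarith
  have h4b : (n:ℝ)/4 ≤ ((n - (k+1) + 1 - (k+1-l) : ℕ) : ℝ) := by
    have h : n ≤ 4*(n-(k+1)+1-(k+1-l)) := by omega
    have h' : (n:ℝ) ≤ 4*((n-(k+1)+1-(k+1-l) : ℕ):ℝ) := by exact_mod_cast h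
    linarith
  have hfac1 : (0:ℝ) < ((Nat.factorial (k+1)) : ℝ) := by exact_mod_cast Nat.factorial_pos (k+1)
  have hfac2 : (0:ℝ) < ((Nat.factorial (k+1-l)) : ℝ) := by exact_mod_cast Nat.factorial_pos (k+1-l)
  have hch1 : ((n:ℝ)/4)^(k+1) / ((Nat.factorial (k+1)) : ℝ) ≤ (n.choose (k+1) : ℝ) := by
    refine le_trans ?_ (Nat.pow_le_choose (k+1) n)
    gcongr
  have hch2 : ((n:ℝ)/4)^(k+1-l) / ((Nat.factorial (k+1-l)) : ℝ) ≤ ((n-(k+1)).choose (k+1-l) : ℝ) := by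
    refine le_trans ?_ (Nat.pow_le_choose (k+1-l) (n-(k+1)))
    gcongr
  have hone : (1:ℝ) ≤ ((k+1).choose l : ℝ) := by
    exact_mod_cast Nat.succ_le_of_lt (Nat.choose_pos hl)
  have hstep : ((n:ℝ))^(2*(k+1)-l) / ((4:ℝ)^(2*(k+1)) * ((Nat.factorial (k+1)) : ℝ) * ((Nat.factorial (k+1)) : ℝ))
      ≤ (((n:ℝ)/4)^(k+1) / ((Nat.factorial (k+1)) : ℝ)) * (1 * (((n:ℝ)/4)^(k+1-l) / ((Nat.factorial (k+1-l)) : ℝ))) := by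
    have hepow : ((n:ℝ)/4)^(k+1) * ((n:ℝ)/4)^(k+1-l) = ((n:ℝ)/4)^(2*(k+1)-l) := by
      rw [← pow_add]
      congr 1
      omega
    have hd1 : ((n:ℝ)/4)^(2*(k+1)-l) = (n:ℝ)^(2*(k+1)-l) / (4:ℝ)^(2*(k+1)-l) := div_pow _ _ _
    rw [one_mul, div_mul_div_comm, hepow, hd1, div_div]
    apply div_le_div_of_nonneg_left (by positivity) (by positivity)
    have h44 : (4:ℝ)^(2*(k+1)-l) ≤ (4:ℝ)^(2*(k+1)) :=
      pow_le_pow_right₀ (by norm_num) (by omega)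
    have hff : ((Nat.factorial (k+1-l)) : ℝ) ≤ ((Nat.factorial (k+1)) : ℝ) := by
      exact_mod_cast Nat.factorial_le (by omega : k+1-l ≤ k+1)
    calc (4:ℝ)^(2*(k+1)-l) * (((Nat.factorial (k+1)) : ℝ) * ((Nat.factorial (k+1-l)) : ℝ))
        ≤ (4:ℝ)^(2*(k+1)) * (((Nat.factorial (k+1)) : ℝ) * ((Nat.factorial (k+1)) : ℝ)) := by
          apply mul_le_mul h44 (by apply mul_le_mul_of_nonneg_left hff hfac1.le)
            (by positivity) (by positivity)
      _ = (4:ℝ)^(2*(k+1)) * ((Nat.factorial (k+1)) : ℝ) * ((Nat.factorial (k+1)) : ℝ) := by ring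
  refine le_trans hstep ?_
  rw [NN_eq n k l hl]
  push_cast
  apply mul_le_mul hch1 ?_ ?_ ?_
  · apply mul_le_mul hone hch2 (by positivity) (by linarith)
  · positivity
  · positivity


/-- For `j ≠ k`, `Var[f_{n,j}] / Var[f_{n,k}] → 0` as `n → ∞`
when `p = n^α` with `α ∈ (-1/k, -1/(k+1))`. -/
theorem variance_ratio_cliqueCounts_tendsto_zero (k : ℕ) (hk : 1 ≤ k)
    (j : ℕ) (hjk : j ≠ k) (α : ℝ)
    (hα : α ∈ Set.Ioo (-(1 / (k : ℝ))) (-(1 / ((k : ℝ) + 1)))) :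
    Filter.Tendsto
      (fun n : ℕ =>
        staticVar n ((n : ℝ) ^ α) (cliqueCountR n j) /
          staticVar n ((n : ℝ) ^ α) (cliqueCountR n k))
      Filter.atTop (nhds 0) := by
  obtain ⟨hα1, hα2⟩ := hα
  have hα0 : α < 0 := by
    have h0 : (0:ℝ) < 1/((k:ℝ)+1) := by positivity
    linarith
  set M : ℝ := max (PHI α k 2) (PHI α k ((k:ℝ)+1)) with hM
  set c0 : ℝ := (4:ℝ)^(2*(k+1)) * ((Nat.factorial (k+1)) : ℝ) * ((Nat.factorial (k+1)) : ℝ)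
    with hc0
  have hc0pos : 0 < c0 := by
    have hfac1 : (0:ℝ) < ((Nat.factorial (k+1)) : ℝ) := by
      exact_mod_cast Nat.factorial_pos (k+1)
    positivity
  set K : ℝ := (((j+1)^(j+1) : ℕ) : ℝ) with hK
  have hKpos : 0 < K := by rw [hK]; positivity
  set Cst : ℝ := (2*c0) * K with hCst
  set B : ℕ → ℝ := fun n => ∑ l ∈ Finset.Icc 2 (j+1), Cst * (n:ℝ)^(PHI α j l - M) with hB
  -- limit of the bound
  have hBlim : Tendsto B atTop (nhds 0) := by
    have h : Tendsto (fun n : ℕ => ∑ l ∈ Finset.Icc 2 (j+1), Cst * (n:ℝ)^(PHI α j l - M))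
        atTop (nhds (∑ _l ∈ Finset.Icc 2 (j+1), (0:ℝ))) := by
      apply tendsto_finset_sum
      intro l hl
      rw [Finset.mem_Icc] at hl
      have hexp : PHI α j l < M := exponent_lt k j l hk hjk hl.1 hl.2 α hα1 hα2
      have h1 := (tendsto_rpow_neg_atTop (y := M - PHI α j l)
        (by linarith)).comp tendsto_natCast_atTop_atTop
      simp only [neg_sub, Function.comp] at h1
      simpa using h1.const_mul Cst
    simpa using h
  -- eventual smallness of p
  have hptend : Tendsto (fun n : ℕ => (n:ℝ)^α) atTop (nhds 0) := by
    have h1 := (tendsto_rpow_neg_atTop (y := -α) (by linarith)).comp tendsto_natCast_atTop_atTop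
    simpa [Function.comp_def, neg_neg] using h1
  have hev1 : ∀ᶠ n : ℕ in atTop, (n:ℝ)^α ≤ 1/2 :=
    hptend.eventually_le_const (by norm_num)
  have hev2 : ∀ᶠ n : ℕ in atTop, 4*(k+1)+4 ≤ n := eventually_ge_atTop _
  apply squeeze_zero' ?_ ?_ hBlim
  · filter_upwards [hev2] with n hn
    have hn1' : (1:ℝ) ≤ (n:ℝ) := by exact_mod_cast (by omega : 1 ≤ n)
    have hp0 : (0:ℝ) ≤ (n:ℝ)^α := Real.rpow_nonneg (by linarith) α
    have hp1 : (n:ℝ)^α ≤ 1 := Real.rpow_le_one_of_one_le_of_nonpos hn1' hα0.le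
    exact div_nonneg (staticVar_nonneg hp0 hp1 _) (staticVar_nonneg hp0 hp1 _)
  · filter_upwards [hev1, hev2] with n hp2 hn
    set p : ℝ := (n:ℝ)^α with hp
    have hn1 : (1:ℕ) ≤ n := by omega
    have hn0 : (0:ℝ) < (n:ℝ) := by exact_mod_cast Nat.lt_of_lt_of_le Nat.zero_lt_one hn1
    have hn1' : (1:ℝ) ≤ (n:ℝ) := by exact_mod_cast hn1
    have hp0 : 0 < p := Real.rpow_pos_of_pos hn0 α
    have hp1 : p ≤ 1 := Real.rpow_le_one_of_one_le_of_nonpos hn1' hα0.le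
    have hpc : ∀ c : ℕ, p^c = (n:ℝ)^(α * (c:ℝ)) := by
      intro c
      rw [hp]
      rw [← Real.rpow_natCast ((n:ℝ)^α) c, ← Real.rpow_mul hn0.le]
    have hcomb : ∀ a c : ℕ, (n:ℝ)^a * p^c = (n:ℝ)^(((a:ℕ):ℝ) + α*((c:ℕ):ℝ)) := by
      intro a c
      rw [Real.rpow_add hn0, Real.rpow_natCast, hpc c]
    -- numerator upper bound
    have hvarj : staticVar n p (cliqueCountR n j)
        ≤ ∑ l ∈ Finset.Icc 2 (j+1), K * (n:ℝ)^(PHI α j l) := by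
      rw [var_identity]
      have hsub : Finset.Icc 2 (j+1) ⊆ Finset.range (j+2) := by
        intro x hx
        rw [Finset.mem_Icc] at hx
        rw [Finset.mem_range]
        omega
      have hzero : ∀ x ∈ Finset.range (j+2), x ∉ Finset.Icc 2 (j+1) →
          (NN n j x : ℝ) * (p ^ (2*(j+1).choose 2 - x.choose 2) - p ^ (2*(j+1).choose 2)) = 0 := by
        intro x hx hxn
        rw [Finset.mem_range] at hx
        rw [Finset.mem_Icc] at hxn
        have hx2 : x < 2 := by omega
        rw [Nat.choose_eq_zero_of_lt hx2, Nat.sub_zero, sub_self, mul_zero]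
      rw [← Finset.sum_subset hsub hzero]
      apply Finset.sum_le_sum
      intro l hl
      rw [Finset.mem_Icc] at hl
      have hNup : NN n j l ≤ (j+1)^(j+1) * n^(2*(j+1)-l) := NN_le n j l hl.2
      have hterm1 : (p ^ (2*(j+1).choose 2 - l.choose 2) - p ^ (2*(j+1).choose 2))
          ≤ p ^ (2*(j+1).choose 2 - l.choose 2) := by
        have := pow_nonneg hp0.le (2*(j+1).choose 2)
        linarith
      calc (NN n j l : ℝ) * (p ^ (2*(j+1).choose 2 - l.choose 2) - p ^ (2*(j+1).choose 2))
          ≤ (NN n j l : ℝ) * p ^ (2*(j+1).choose 2 - l.choose 2) :=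
            mul_le_mul_of_nonneg_left hterm1 (Nat.cast_nonneg _)
        _ ≤ (((j+1)^(j+1) * n^(2*(j+1)-l) : ℕ) : ℝ) * p ^ (2*(j+1).choose 2 - l.choose 2) := by
            apply mul_le_mul_of_nonneg_right ?_ (pow_nonneg hp0.le _)
            exact_mod_cast hNup
        _ = K * ((n:ℝ)^(2*(j+1)-l) * p ^ (2*(j+1).choose 2 - l.choose 2)) := by
            rw [hK]
            push_cast
            ring
        _ = K * (n:ℝ)^(EE j l α) := by
            rw [hcomb (2*(j+1)-l) (2*(j+1).choose 2 - l.choose 2), EE]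
        _ = K * (n:ℝ)^(PHI α j l) := by rw [EE_eq_PHI j l hl.2 α]
    -- denominator lower bound
    have hvark : ∀ l : ℕ, 2 ≤ l → l ≤ k+1 →
        (1/(2*c0)) * (n:ℝ)^(PHI α k l) ≤ staticVar n p (cliqueCountR n k) := by
      intro l hl2 hlk
      have hterm : (NN n k l : ℝ) * (p^(2*(k+1).choose 2 - l.choose 2) - p^(2*(k+1).choose 2))
          ≤ staticVar n p (cliqueCountR n k) := by
        rw [var_identity]
        apply Finset.single_le_sum
          (f := fun l => (NN n k l : ℝ)
            * (p^(2*(k+1).choose 2 - l.choose 2) - p^(2*(k+1).choose 2)))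
        · intro i _
          apply mul_nonneg (Nat.cast_nonneg _)
          have := pow_le_pow_of_le_one hp0.le hp1 (Nat.sub_le (2*(k+1).choose 2) (i.choose 2))
          linarith
        · rw [Finset.mem_range]; omega
      have hc1 : 1 ≤ l.choose 2 := by
        have h := Nat.choose_le_choose 2 hl2
        simpa using h
      have hcle : l.choose 2 ≤ 2*(k+1).choose 2 :=
        le_trans (Nat.choose_le_choose 2 hlk) (by omega)
      have hpsplit : p^(2*(k+1).choose 2)
          = p^(2*(k+1).choose 2 - l.choose 2) * p^(l.choose 2) := by
        rw [← pow_add]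
        congr 1
        omega
      have hpcl : p^(l.choose 2) ≤ 1/2 := by
        calc p^(l.choose 2) ≤ p^1 := pow_le_pow_of_le_one hp0.le hp1 hc1
          _ = p := pow_one p
          _ ≤ 1/2 := hp2
      have hdiff : p^(2*(k+1).choose 2 - l.choose 2) * (1/2)
          ≤ p^(2*(k+1).choose 2 - l.choose 2) - p^(2*(k+1).choose 2) := by
        rw [hpsplit]
        have hnn : (0:ℝ) ≤ p^(2*(k+1).choose 2 - l.choose 2) := pow_nonneg hp0.le _
        nlinarith [hpcl, hnn]
      have hNlow := NN_ge n k l hl2 hlk hn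
      calc (1/(2*c0)) * (n:ℝ)^(PHI α k l)
          = ((n:ℝ)^(2*(k+1)-l) / c0) * p^(2*(k+1).choose 2 - l.choose 2) * (1/2) := by
            rw [← EE_eq_PHI k l hlk α, EE, ← hcomb (2*(k+1)-l) (2*(k+1).choose 2 - l.choose 2)]
            field_simp
        _ ≤ (NN n k l : ℝ) * p^(2*(k+1).choose 2 - l.choose 2) * (1/2) := by
            apply mul_le_mul_of_nonneg_right ?_ (by norm_num)
            apply mul_le_mul_of_nonneg_right ?_ (pow_nonneg hp0.le _)
            rw [div_eq_mul_inv] at hNlow ⊢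
            calc (n:ℝ)^(2*(k+1)-l) * c0⁻¹
                = (n:ℝ)^(2*(k+1)-l) * ((4:ℝ)^(2*(k+1)) * ((Nat.factorial (k+1)) : ℝ)
                    * ((Nat.factorial (k+1)) : ℝ))⁻¹ := by rw [hc0]
              _ ≤ (NN n k l : ℝ) := hNlow
        _ = (NN n k l : ℝ) * (p^(2*(k+1).choose 2 - l.choose 2) * (1/2)) := by ring
        _ ≤ (NN n k l : ℝ) * (p^(2*(k+1).choose 2 - l.choose 2) - p^(2*(k+1).choose 2)) :=
            mul_le_mul_of_nonneg_left hdiff (Nat.cast_nonneg _)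
        _ ≤ staticVar n p (cliqueCountR n k) := hterm
    have hDen : (1/(2*c0)) * (n:ℝ)^M ≤ staticVar n p (cliqueCountR n k) := by
      rcases max_cases (PHI α k 2) (PHI α k ((k:ℝ)+1)) with ⟨hMeq, _⟩ | ⟨hMeq, _⟩
      · rw [hM, hMeq]
        have h := hvark 2 le_rfl (by omega)
        have h2 : PHI α (k:ℝ) ((2:ℕ):ℝ) = PHI α (k:ℝ) 2 := by norm_num
        rw [h2] at h
        exact h
      · rw [hM, hMeq]
        have h := hvark (k+1) (by omega) le_rfl
        have h2 : PHI α (k:ℝ) (((k+1:ℕ)):ℝ) = PHI α (k:ℝ) ((k:ℝ)+1) := by push_cast; ring_nf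
        rw [h2] at h
        exact h
    -- combine
    have hDpos : (0:ℝ) < (1/(2*c0)) * (n:ℝ)^M := by
      have := Real.rpow_pos_of_pos hn0 M
      positivity
    have hNumNonneg : 0 ≤ ∑ l ∈ Finset.Icc 2 (j+1), K * (n:ℝ)^(PHI α j l) := by
      apply Finset.sum_nonneg
      intro l _
      have := Real.rpow_pos_of_pos hn0 (PHI α j l)
      positivity
    calc staticVar n p (cliqueCountR n j) / staticVar n p (cliqueCountR n k)
        ≤ (∑ l ∈ Finset.Icc 2 (j+1), K * (n:ℝ)^(PHI α j l)) / ((1/(2*c0)) * (n:ℝ)^M) :=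
          div_le_div₀ hNumNonneg hvarj hDpos hDen
      _ = B n := by
          rw [hB]
          rw [Finset.sum_div]
          refine Finset.sum_congr rfl fun l _ => ?_
          rw [Real.rpow_sub hn0]
          have hnM : (n:ℝ)^M ≠ 0 := (Real.rpow_pos_of_pos hn0 M).ne'
          field_simp
          ring

end
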